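/- Let x, x̂, k̂, l̂, ŵ, L, r : ℝ → ℝ with x and x̂ differentiable at t, satisfying ẋ(t) = a·x(t) + b·(u(t) − w) with the blended control u = −k̂·(θ(e₂)·x̂ + (1 − θ(e₂))·x) + l̂·r + ŵ, and dx̂/dt(t) = −a_m·x̂(t) + b_m·r(t) + L(t)·(x(t) − x̂(t)), where a_m = b·k* − a and b_m = l*·b. Then the observer error e₂ := x − x̂ satisfies de₂/dt(t) = −(a_m + L(t))·e₂(t) + b·l̃(t)·r(t) − b·k̃(t)·x(t) + b·k̂(t)·θ(e₂(t))·e₂(t) + b·w̃(t), where k̃ = k̂ − k*, l̃ = l̂ − l*, w̃ = ŵ − w. -/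

import Mathlib

/-- Observer-error dynamics with the blended control law.
With plant `ẋ = a·x + b·(u − w)`, blended control
`u = −k̂·(θ(e₂)·x̂ + (1 − θ(e₂))·x) + l̂·r + ŵ`, observer dynamics, and matching
conditions, the error `e₂ := x − x̂` satisfies
`ė₂ = −(a_m + L)·e₂ + b·l̃·r − b·k̃·x + b·k̂·θ(e₂)·e₂ + b·w̃`. -/
theorem stmt_13
    (a b w aₘ bₘ kstar lstar α β t : ℝ)
    (x xh kh lh wh L r u : ℝ → ℝ) (θ : ℝ → ℝ)
    (hβ : 0 < β) (hα : 0 < α)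
    (hθ : θ = fun s => 2 * α / (1 + Real.exp (β * |s|)))
    (hmatch_k : aₘ = b * kstar - a) (hmatch_l : bₘ = lstar * b)
    (hu : u t = -(kh t) * (θ (x t - xh t) * xh t
        + (1 - θ (x t - xh t)) * x t) + lh t * r t + wh t)
    (hplant : HasDerivAt x (a * x t + b * (u t - w)) t)
    (hobs : HasDerivAt xh (-aₘ * xh t + bₘ * r t + L t * (x t - xh t)) t) :
    HasDerivAt (fun s => x s - xh s)
      (-(aₘ + L t) * (x t - xh t) + b * (lh t - lstar) * r t
        - b * (kh t - kstar) * x t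
        + b * kh t * θ (x t - xh t) * (x t - xh t) + b * (wh t - w)) t := by
  have h := hplant.sub hobs
  refine h.congr_deriv ?_
  rw [hu, hmatch_k, hmatch_l]
  ring
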